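/- (Jacobi's Theorem, 2×2 case.) Let n ≥ 2 and let A be an n×n matrix over a commutative ring R. Fix rows p < q and columns u < v (all between 1 and n), and let A'(r,c) denote the (r,c) cofactor of A. Then A'(p,u) · A'(q,v) − A'(p,v) · A'(q,u) = det(A) · det(B) · (−1)^{p+q+u+v}, where B is the (n−2)×(n−2) submatrix of A obtained by deleting rows p and q and columns u and v. -/

import Mathlib

/-- `skip a x` is the `x`-th natural number (in increasing order) different from `a`. -/
def skip (a x : ℕ) : ℕ := if x < a then x else x + 1

theorem skip_le (a x : ℕ) : skip a x ≤ x + 1 := by unfold skip; split <;> omega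

/-- The `(i, j)` minor of `A`: the determinant of the `(n-1) × (n-1)` submatrix
obtained from `A` by deleting row `i` and column `j` (no sign attached). -/
def dmMinor {R : Type*} [CommRing R] {n : ℕ} (A : Matrix (Fin n) (Fin n) R)
    (i j : Fin n) : R :=
  (Matrix.of fun r c : Fin (n - 1) =>
    A ⟨skip i.1 r.1, by have := skip_le i.1 r.1; omega⟩
      ⟨skip j.1 c.1, by have := skip_le j.1 c.1; omega⟩).det

/-- The `(i, j)` cofactor of `A`: `(−1)^{i+j}` times the `(i, j)` minor. -/
def cofactor {R : Type*} [CommRing R] {n : ℕ} (A : Matrix (Fin n) (Fin n) R)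
    (i j : Fin n) : R :=
  (-1 : R) ^ (i.1 + j.1) * dmMinor A i j

/- ### Auxiliary facts about `skip` -/

theorem skip_inj {a x y : ℕ} (h : skip a x = skip a y) : x = y := by
  unfold skip at h; split_ifs at h <;> omega

theorem skipskip_ne_left {u v : ℕ} (k : ℕ) (huv : u < v) : skip v (skip u k) ≠ u := by
  unfold skip; split_ifs <;> omega

theorem skipskip_ne_right {u v : ℕ} (k : ℕ) (huv : u < v) : skip v (skip u k) ≠ v := by
  unfold skip; split_ifs <;> omega

theorem skip_skip_comm {p q : ℕ} (hpq : p < q) (r : ℕ) :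
    skip p (skip (q - 1) r) = skip q (skip p r) := by
  unfold skip; split_ifs <;> omega

theorem coe_succAbove {m : ℕ} (i : Fin (m + 1)) (r : Fin m) :
    (i.succAbove r).1 = skip i.1 r.1 := by
  unfold Fin.succAbove skip
  rcases Nat.lt_or_ge r.1 i.1 with h | h
  · rw [if_pos (by simpa [Fin.lt_def] using h), if_pos h]; rfl
  · rw [if_neg (by simp [Fin.lt_def]; omega), if_neg (by omega)]; rfl

section CommRing
variable {R : Type*} [CommRing R]

theorem dmMinor_eq {m : ℕ} (A : Matrix (Fin (m + 1)) (Fin (m + 1)) R) (i j : Fin (m + 1)) :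
    dmMinor A i j = (A.submatrix i.succAbove j.succAbove).det := by
  unfold dmMinor
  congr 1
  ext r c
  rw [Matrix.of_apply, Matrix.submatrix_apply]
  congr 1 <;> exact Fin.ext (coe_succAbove _ _).symm

/-- Expansion of a determinant along a column which is `d` times a basis vector. -/
theorem det_eq_of_column {m : ℕ} (A : Matrix (Fin (m + 1)) (Fin (m + 1)) R)
    (i j : Fin (m + 1)) (d : R) (h : ∀ r, A r j = if r = i then d else 0) :
    A.det = (-1 : R) ^ (i.1 + j.1) * d * dmMinor A i j := by
  rw [Matrix.det_succ_column A j, Finset.sum_eq_single i]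
  · rw [h i, if_pos rfl, dmMinor_eq]
  · intro r _ hr
    rw [h r, if_neg hr, mul_zero, zero_mul]
  · intro h'; exact absurd (Finset.mem_univ i) h'

/-- Laplace expansion along a row, including the alien-cofactor case. -/
theorem sum_mul_cofactor {m : ℕ} (A : Matrix (Fin (m + 1)) (Fin (m + 1)) R)
    (i p : Fin (m + 1)) :
    ∑ k, A i k * cofactor A p k = if i = p then A.det else 0 := by
  split
  · rename_i h; subst h
    rw [Matrix.det_succ_row A i]
    refine Finset.sum_congr rfl fun k _ => ?_
    rw [cofactor, dmMinor_eq]; ring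
  · rename_i h
    have h0 : (A.updateRow p (A i)).det = 0 :=
      Matrix.det_zero_of_row_eq h
        (by simp [Function.ne_iff] at h ⊢; simp [Matrix.updateRow_apply, h])
    rw [Matrix.det_succ_row (A.updateRow p (A i)) p] at h0
    rw [← h0]
    refine Finset.sum_congr rfl fun k _ => ?_
    rw [Matrix.updateRow_self, cofactor, dmMinor_eq]
    have : (A.updateRow p (A i)).submatrix p.succAbove k.succAbove
        = A.submatrix p.succAbove k.succAbove := by
      ext r c
      simp [Matrix.submatrix_apply, Matrix.updateRow_ne (Fin.succAbove_ne p r)]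
    rw [this]; ring

/-- Determinant of a matrix equal to the identity outside of two columns. -/
theorem det_special {m : ℕ} (u v : Fin (m + 2)) (huv : u.1 < v.1)
    (a b : Fin (m + 2) → R)
    (M : Matrix (Fin (m + 2)) (Fin (m + 2)) R)
    (hM : ∀ i c, M i c = if c = u then a i else if c = v then b i
        else if i = c then (1:R) else 0) :
    M.det = a u * b v - b u * a v := by
  have hb : ∀ k : Fin m, skip v.1 (skip u.1 k.1) < m + 2 := fun k => by
    have h1 := skip_le u.1 k.1; have h2 := skip_le v.1 (skip u.1 k.1); omega
  set f : Fin 2 ⊕ Fin m → Fin (m + 2) :=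
    Sum.elim (fun b => if b = 0 then u else v) (fun k => ⟨skip v.1 (skip u.1 k.1), hb k⟩) with hf
  have hfinj : Function.Injective f := by
    intro x y hxy
    have hne : u ≠ v := by intro h; rw [h] at huv; omega
    rcases x with x | x <;> rcases y with y | y <;> simp [hf] at hxy ⊢
    · split_ifs at hxy with h1 h2 h2
      · omega
      · exact absurd hxy hne
      · exact absurd hxy.symm hne
      · omega
    · exfalso; split_ifs at hxy <;>
        [exact skipskip_ne_left y.1 huv (congrArg Fin.val hxy).symm;
         exact skipskip_ne_right y.1 huv (congrArg Fin.val hxy).symm]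
    · exfalso; split_ifs at hxy <;>
        [exact skipskip_ne_left x.1 huv (congrArg Fin.val hxy);
         exact skipskip_ne_right x.1 huv (congrArg Fin.val hxy)]
    · exact Fin.ext (skip_inj (skip_inj hxy))
  have hfbij : Function.Bijective f :=
    (Fintype.bijective_iff_injective_and_card f).mpr ⟨hfinj, by simp; omega⟩
  set e : (Fin 2 ⊕ Fin m) ≃ Fin (m + 2) := Equiv.ofBijective f hfbij with he
  have hdet : (M.submatrix e e).det = M.det := Matrix.det_submatrix_equiv_self e M
  rw [← hdet]
  have hblocks : M.submatrix e e =
      Matrix.fromBlocks !![a u, b u; a v, b v] 0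
        (Matrix.of fun k bb => M (e (Sum.inr k)) (e (Sum.inl bb))) 1 := by
    ext x y
    rcases x with x | x <;> rcases y with y | y
    · have hvu : v ≠ u := by intro h; rw [h] at huv; omega
      fin_cases x <;> fin_cases y <;>
        simp [he, hf, hM, hvu] <;> (intro h; exact absurd h hvu)
    · have h1 : f (Sum.inr y) ≠ u := fun h => skipskip_ne_left y.1 huv (congrArg Fin.val h)
      have h2 : f (Sum.inr y) ≠ v := fun h => skipskip_ne_right y.1 huv (congrArg Fin.val h)
      have h3 : f (Sum.inl x) ≠ f (Sum.inr y) := fun h => by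
        fin_cases x <;> simp [hf] at h <;>
          [exact h1 h.symm; exact h2 h.symm]
      simp only [Matrix.submatrix_apply, Matrix.fromBlocks_apply₁₂, Matrix.zero_apply]
      rw [show e (Sum.inr y) = f (Sum.inr y) from rfl, show e (Sum.inl x) = f (Sum.inl x) from rfl,
        hM, if_neg h1, if_neg h2, if_neg h3]
    · rfl
    · have h1 : f (Sum.inr y) ≠ u := fun h => skipskip_ne_left y.1 huv (congrArg Fin.val h)
      have h2 : f (Sum.inr y) ≠ v := fun h => skipskip_ne_right y.1 huv (congrArg Fin.val h)
      simp only [Matrix.submatrix_apply, Matrix.fromBlocks_apply₂₂]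
      rw [show e (Sum.inr y) = f (Sum.inr y) from rfl, show e (Sum.inr x) = f (Sum.inr x) from rfl,
        hM, if_neg h1, if_neg h2, Matrix.one_apply]
      congr 1
      simp only [eq_iff_iff]
      constructor
      · intro h; exact Sum.inr.inj (hfinj (h ▸ rfl))
      · intro h; rw [h]
  rw [hblocks, Matrix.det_fromBlocks_zero₁₂, Matrix.det_one, mul_one, Matrix.det_fin_two_of]

/-- Determinant of the matrix `N` obtained from `A` by replacing columns `u` and `v`
by `d` times the basis vectors `e_p` and `e_q`. -/
theorem det_N {m : ℕ} (A : Matrix (Fin (m + 2)) (Fin (m + 2)) R) (d : R)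
    (p q u v : Fin (m + 2)) (hpq : p.1 < q.1) (huv : u.1 < v.1)
    (N : Matrix (Fin (m + 2)) (Fin (m + 2)) R)
    (hN : ∀ i c, N i c = if c = u then (if i = p then d else 0)
        else if c = v then (if i = q then d else 0) else A i c)
    (B : Matrix (Fin m) (Fin m) R)
    (hB : ∀ (r c : Fin m) (h1 : skip q.1 (skip p.1 r.1) < m + 2)
        (h2 : skip v.1 (skip u.1 c.1) < m + 2),
        B r c = A ⟨skip q.1 (skip p.1 r.1), h1⟩ ⟨skip v.1 (skip u.1 c.1), h2⟩) :
    N.det = d * d * B.det * (-1 : R) ^ (p.1 + q.1 + u.1 + v.1) := by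
  have hvu : v ≠ u := by intro h; rw [h] at huv; omega
  have hr : ∀ x : Fin (m + 1), skip p.1 x.1 < m + 2 := fun x => by
    have := skip_le p.1 x.1; omega
  have hc : ∀ x : Fin (m + 1), skip u.1 x.1 < m + 2 := fun x => by
    have := skip_le u.1 x.1; omega
  set N₁ : Matrix (Fin (m + 1)) (Fin (m + 1)) R :=
    Matrix.of fun r c => N ⟨skip p.1 r.1, hr r⟩ ⟨skip u.1 c.1, hc c⟩ with hN₁
  set i₀ : Fin (m + 1) := ⟨q.1 - 1, by have := q.isLt; omega⟩ with hi₀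
  set j₀ : Fin (m + 1) := ⟨v.1 - 1, by have := v.isLt; omega⟩ with hj₀
  have step1 : N.det = (-1 : R) ^ (p.1 + u.1) * d * dmMinor N p u := by
    refine det_eq_of_column N p u d fun r => ?_
    rw [hN, if_pos rfl]
  have step2 : dmMinor N p u = N₁.det := rfl
  have hj₀v : skip u.1 j₀.1 = v.1 := by
    show skip u.1 (v.1 - 1) = v.1; unfold skip; split <;> omega
  have step3 : N₁.det = (-1 : R) ^ ((q.1 - 1) + (v.1 - 1)) * d * dmMinor N₁ i₀ j₀ := by
    refine det_eq_of_column N₁ i₀ j₀ d fun r => ?_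
    have h1 : (⟨skip u.1 j₀.1, hc j₀⟩ : Fin (m + 2)) = v := Fin.ext hj₀v
    have hiff : ((⟨skip p.1 r.1, hr r⟩ : Fin (m + 2)) = q) ↔ r = i₀ := by
      rw [Fin.ext_iff, Fin.ext_iff]
      show skip p.1 r.1 = q.1 ↔ r.1 = q.1 - 1
      unfold skip; split <;> omega
    show N ⟨skip p.1 r.1, hr r⟩ ⟨skip u.1 j₀.1, hc j₀⟩ = _
    rw [hN, h1, if_neg hvu, if_pos rfl]
    simp only [hiff]
  have step4 : dmMinor N₁ i₀ j₀ = B.det := by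
    unfold dmMinor
    refine congrArg Matrix.det ?_
    ext r c
    simp only [Matrix.of_apply, hN₁]
    have hrow : skip p.1 (skip (q.1 - 1) r.1) = skip q.1 (skip p.1 r.1) :=
      skip_skip_comm hpq r.1
    have hcol : skip u.1 (skip (v.1 - 1) c.1) = skip v.1 (skip u.1 c.1) :=
      skip_skip_comm huv c.1
    rw [hN]
    rw [if_neg (fun h => skipskip_ne_left c.1 huv (by
      have h2 : skip u.1 (skip (v.1 - 1) c.1) = u.1 := congrArg Fin.val h
      rw [hcol] at h2; exact h2))]
    rw [if_neg (fun h => skipskip_ne_right c.1 huv (by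
      have h2 : skip u.1 (skip (v.1 - 1) c.1) = v.1 := congrArg Fin.val h
      rw [hcol] at h2; exact h2))]
    rw [hB r c
      (by have := skip_le p.1 r.1; have := skip_le q.1 (skip p.1 r.1); omega)
      (by have := skip_le u.1 c.1; have := skip_le v.1 (skip u.1 c.1); omega)]
    congr 1 <;> exact Fin.ext (by assumption)
  rw [step1, step2, step3, step4]
  have hexp : p.1 + q.1 + u.1 + v.1 = (p.1 + u.1) + ((q.1 - 1) + (v.1 - 1)) + 2 := by
    omega
  rw [hexp, pow_add, pow_add]
  ring

/-- The key identity: Jacobi's identity multiplied by `det A`, valid over any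
commutative ring. -/
theorem jacobi_key {m : ℕ} (A : Matrix (Fin (m + 2)) (Fin (m + 2)) R)
    (p q u v : Fin (m + 2)) (hpq : p.1 < q.1) (huv : u.1 < v.1)
    (B : Matrix (Fin m) (Fin m) R)
    (hB : ∀ (r c : Fin m) (h1 : skip q.1 (skip p.1 r.1) < m + 2)
        (h2 : skip v.1 (skip u.1 c.1) < m + 2),
        B r c = A ⟨skip q.1 (skip p.1 r.1), h1⟩ ⟨skip v.1 (skip u.1 c.1), h2⟩) :
    A.det * (cofactor A p u * cofactor A q v - cofactor A p v * cofactor A q u)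
      = A.det * (A.det * B.det * (-1 : R) ^ (p.1 + q.1 + u.1 + v.1)) := by
  have hvu : v ≠ u := by intro h; rw [h] at huv; omega
  set M : Matrix (Fin (m + 2)) (Fin (m + 2)) R := Matrix.of fun i c =>
    if c = u then cofactor A p i else if c = v then cofactor A q i
    else if i = c then (1:R) else 0 with hM
  have hMdet : M.det = cofactor A p u * cofactor A q v - cofactor A q u * cofactor A p v :=
    det_special u v huv _ _ M (fun i c => rfl)
  set N : Matrix (Fin (m + 2)) (Fin (m + 2)) R := Matrix.of fun i c =>
    if c = u then (if i = p then A.det else 0)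
    else if c = v then (if i = q then A.det else 0) else A i c with hNdef
  have hAM : A * M = N := by
    ext i c
    rw [Matrix.mul_apply]
    show _ = Matrix.of _ i c
    rw [Matrix.of_apply]
    by_cases hcu : c = u
    · subst hcu
      rw [if_pos rfl]
      refine (Finset.sum_congr rfl fun k _ => ?_).trans (sum_mul_cofactor A i p)
      simp [hM]
    · rw [if_neg hcu]
      by_cases hcv : c = v
      · subst hcv
        rw [if_pos rfl]
        refine (Finset.sum_congr rfl fun k _ => ?_).trans (sum_mul_cofactor A i q)
        simp [hM, hcu]
      · rw [if_neg hcv]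
        calc (∑ k, A i k * M k c) = ∑ k, A i k * (if k = c then (1:R) else 0) :=
              Finset.sum_congr rfl fun k _ => by simp [hM, hcu, hcv]
          _ = A i c := by simp [mul_ite]
  have h1 : A.det * M.det = N.det := by rw [← Matrix.det_mul, hAM]
  have h2 : N.det = A.det * A.det * B.det * (-1 : R) ^ (p.1 + q.1 + u.1 + v.1) :=
    det_N A A.det p q u v hpq huv N (fun i c => rfl) B hB
  rw [hMdet] at h1
  calc A.det * (cofactor A p u * cofactor A q v - cofactor A p v * cofactor A q u)
      = A.det * (cofactor A p u * cofactor A q v - cofactor A q u * cofactor A p v) := by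
        ring
    _ = N.det := h1
    _ = A.det * A.det * B.det * (-1 : R) ^ (p.1 + q.1 + u.1 + v.1) := h2
    _ = A.det * (A.det * B.det * (-1 : R) ^ (p.1 + q.1 + u.1 + v.1)) := by ring

theorem dmMinor_map {S : Type*} [CommRing S] (f : R →+* S) {n : ℕ}
    (A : Matrix (Fin n) (Fin n) R) (i j : Fin n) :
    f (dmMinor A i j) = dmMinor (A.map f) i j := by
  unfold dmMinor
  rw [RingHom.map_det]
  rfl

theorem cofactor_map {S : Type*} [CommRing S] (f : R →+* S) {n : ℕ}
    (A : Matrix (Fin n) (Fin n) R) (i j : Fin n) :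
    f (cofactor A i j) = cofactor (A.map f) i j := by
  unfold cofactor
  rw [map_mul, map_pow, map_neg, map_one, dmMinor_map]

end CommRing

/-- **Jacobi's Theorem, 2×2 case.**  For `n ≥ 2`, rows `p < q` and columns
`u < v` of an `n × n` matrix `A` over a commutative ring,
`A'(p,u)·A'(q,v) − A'(p,v)·A'(q,u) = det A · det B · (−1)^{p+q+u+v}`,
where `A'(r,c)` is the `(r,c)` cofactor of `A` and `B` is the `(n-2) × (n-2)`
submatrix of `A` obtained by deleting rows `p, q` and columns `u, v`. -/
theorem jacobi_two_by_two_cofactors {R : Type*} [CommRing R] {n : ℕ} (hn : 2 ≤ n)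
    (A : Matrix (Fin n) (Fin n) R) (p q u v : Fin n)
    (hpq : p.1 < q.1) (huv : u.1 < v.1) :
    cofactor A p u * cofactor A q v - cofactor A p v * cofactor A q u
      = A.det *
        (Matrix.of fun r c : Fin (n - 2) =>
          A ⟨skip q.1 (skip p.1 r.1), by
                have := skip_le p.1 r.1; have := skip_le q.1 (skip p.1 r.1); omega⟩
            ⟨skip v.1 (skip u.1 c.1), by
                have := skip_le u.1 c.1; have := skip_le v.1 (skip u.1 c.1); omega⟩).det
        * (-1 : R) ^ (p.1 + q.1 + u.1 + v.1) := by
  obtain ⟨m, rfl⟩ : ∃ m, n = m + 2 := ⟨n - 2, by omega⟩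
  have main : ∀ BR : Matrix (Fin m) (Fin m) R,
      (∀ (r c : Fin m) (h1 : skip q.1 (skip p.1 r.1) < m + 2)
          (h2 : skip v.1 (skip u.1 c.1) < m + 2),
          BR r c = A ⟨skip q.1 (skip p.1 r.1), h1⟩ ⟨skip v.1 (skip u.1 c.1), h2⟩) →
      cofactor A p u * cofactor A q v - cofactor A p v * cofactor A q u
        = A.det * BR.det * (-1 : R) ^ (p.1 + q.1 + u.1 + v.1) := by
    intro BR hBR
    set S := MvPolynomial (Fin (m + 2) × Fin (m + 2)) ℤ with hS
    set G : Matrix (Fin (m + 2)) (Fin (m + 2)) S :=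
      Matrix.mvPolynomialX (Fin (m + 2)) (Fin (m + 2)) ℤ with hG
    set φ : S →+* R := MvPolynomial.eval₂Hom (Int.castRingHom R) (fun pq => A pq.1 pq.2) with hφ
    have hmap : G.map φ = A := Matrix.mvPolynomialX_map_eval₂ _ A
    set GB : Matrix (Fin m) (Fin m) S := Matrix.of fun r c =>
      G ⟨skip q.1 (skip p.1 r.1), by
            have := skip_le p.1 r.1; have := skip_le q.1 (skip p.1 r.1); omega⟩
        ⟨skip v.1 (skip u.1 c.1), by
            have := skip_le u.1 c.1; have := skip_le v.1 (skip u.1 c.1); omega⟩ with hGB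
    have hgen := jacobi_key G p q u v hpq huv GB (fun r c h1 h2 => rfl)
    have hdG : G.det ≠ 0 := Matrix.det_mvPolynomialX_ne_zero (Fin (m + 2)) ℤ
    have hcancel := mul_left_cancel₀ hdG hgen
    have e1 : cofactor A p u = φ (cofactor G p u) := by rw [cofactor_map, hmap]
    have e2 : cofactor A q v = φ (cofactor G q v) := by rw [cofactor_map, hmap]
    have e3 : cofactor A p v = φ (cofactor G p v) := by rw [cofactor_map, hmap]
    have e4 : cofactor A q u = φ (cofactor G q u) := by rw [cofactor_map, hmap]
    have e5 : A.det = φ G.det := by rw [RingHom.map_det, RingHom.mapMatrix_apply, hmap]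
    have e6 : BR.det = φ GB.det := by
      rw [RingHom.map_det, RingHom.mapMatrix_apply]
      congr 1
      ext r c
      rw [hBR r c
        (by have := skip_le p.1 r.1; have := skip_le q.1 (skip p.1 r.1); omega)
        (by have := skip_le u.1 c.1; have := skip_le v.1 (skip u.1 c.1); omega)]
      simp only [Matrix.map_apply, hGB, Matrix.of_apply]
      exact (congrFun (congrFun hmap _) _).symm
    have e7 : ((-1 : R)) ^ (p.1 + q.1 + u.1 + v.1)
        = φ ((-1 : S) ^ (p.1 + q.1 + u.1 + v.1)) := by
      rw [map_pow, map_neg, map_one]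
    rw [e1, e2, e3, e4, e5, e6, e7]
    simp only [← map_mul, ← map_sub]
    exact congrArg φ hcancel
  refine main _ (fun r c h1 h2 => rfl)
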